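/- If a lies on the boundary of the copositive cone C_n, then there exists a nonzero nonnegative vector ξ ∈ ℝⁿ with ξᵀaξ = 0. -/

import Mathlib

open Matrix

/-- A matrix is copositive if its quadratic form is nonnegative on the nonnegative orthant. -/
def Copositive {m : Type*} [Fintype m] (a : Matrix m m ℝ) : Prop :=
  ∀ u : m → ℝ, (∀ i, 0 ≤ u i) → 0 ≤ u ⬝ᵥ a *ᵥ u

/-- The submodule of symmetric n×n real matrices. -/
def Sn (n : ℕ) : Submodule ℝ (Matrix (Fin n) (Fin n) ℝ) where
  carrier := {a | a.IsSymm}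
  add_mem' := fun ha hb => ha.add hb
  zero_mem' := Matrix.isSymm_zero
  smul_mem' := fun c a ha => ha.smul c

/-- The copositive cone, as a subset of the symmetric matrices. -/
def Cn (n : ℕ) : Set (Sn n) := {a | Copositive a.1}

/-- The set A^t : symmetric matrices with (t,t) entry zero, all other entries positive. -/
def At (n : ℕ) (t : Fin n) : Set (Sn n) :=
  {a | a.1 t t = 0 ∧ ∀ i j, (i, j) ≠ (t, t) → 0 < a.1 i j}

/-- T_n : symmetric nonnegative matrices with zero diagonal. -/
def Tn (n : ℕ) : Set (Sn n) := {a | (∀ i j, 0 ≤ a.1 i j) ∧ ∀ i, a.1 i i = 0}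

/-- A monomial matrix: exactly one nonzero entry in each row and column. -/
def IsMonomial {n : ℕ} (m : Matrix (Fin n) (Fin n) ℝ) : Prop :=
  (∀ i, ∃! j, m i j ≠ 0) ∧ (∀ j, ∃! i, m i j ≠ 0)

lemma qf_continuous (n : ℕ) :
    Continuous fun p : Sn n × (Fin n → ℝ) => p.2 ⬝ᵥ (p.1 : Matrix (Fin n) (Fin n) ℝ) *ᵥ p.2 :=
  continuous_snd.dotProduct
    ((continuous_subtype_val.comp continuous_fst).matrix_mulVec continuous_snd)

lemma Cn_closed (n : ℕ) : IsClosed (Cn n) := by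
  have : Cn n = ⋂ (u : Fin n → ℝ) (_ : ∀ i, 0 ≤ u i),
      {a : Sn n | 0 ≤ u ⬝ᵥ (a : Matrix (Fin n) (Fin n) ℝ) *ᵥ u} := by
    ext a
    simp [Cn, Copositive, Set.mem_iInter]
  rw [this]
  refine isClosed_iInter fun u => isClosed_iInter fun _ => ?_
  exact isClosed_le continuous_const
    (continuous_const.dotProduct (continuous_subtype_val.matrix_mulVec continuous_const))


set_option maxHeartbeats 1000000 in
set_option synthInstance.maxHeartbeats 200000 in
/-- A boundary point of C_n has a nonzero nonnegative zero of its quadratic form. -/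
theorem stmt_3 (n : ℕ) (a : Sn n) (ha : a ∈ frontier (Cn n)) :
    ∃ ξ : Fin n → ℝ, ξ ≠ 0 ∧ (∀ i, 0 ≤ ξ i) ∧ ξ ⬝ᵥ a.1 *ᵥ ξ = 0 := by
  have haC : Copositive a.1 := by
    have := ha.1
    rwa [(Cn_closed n).closure_eq] at this
  have haCompl : a ∈ closure (Cn n)ᶜ := by
    rw [closure_compl]
    exact ha.2
  haveI : FrechetUrysohnSpace (Sn n) := by
    haveI : FirstCountableTopology (Matrix (Fin n) (Fin n) ℝ) :=
      inferInstanceAs (FirstCountableTopology ((Fin n) → (Fin n) → ℝ))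
    haveI : FirstCountableTopology (Sn n) :=
      TopologicalSpace.Subtype.firstCountableTopology ((Sn n : Set (Matrix (Fin n) (Fin n) ℝ)))
    exact FirstCountableTopology.frechetUrysohnSpace
  obtain ⟨b, hbmem, hb⟩ := mem_closure_iff_seq_limit.mp haCompl
  -- for each k, choose a nonnegative u with negative quadratic form
  have hu : ∀ k, ∃ u : Fin n → ℝ, (∀ i, 0 ≤ u i) ∧ u ⬝ᵥ ((b k : Sn n) : Matrix (Fin n) (Fin n) ℝ) *ᵥ u < 0 := by
    intro k
    have := hbmem k
    simp only [Cn, Set.mem_compl_iff, Set.mem_setOf_eq, Copositive] at this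
    push_neg at this
    obtain ⟨u, hu1, hu2⟩ := this
    exact ⟨u, hu1, hu2⟩
  choose u hu1 hu2 using hu
  -- normalize
  set v : ℕ → (Fin n → ℝ) := fun k => ‖u k‖⁻¹ • u k with hv
  have hun : ∀ k, u k ≠ 0 := by
    intro k h
    have := hu2 k
    rw [h] at this
    simp at this
  have hvnorm : ∀ k, ‖v k‖ = 1 := by
    intro k
    rw [hv]
    simp [norm_smul, norm_inv, inv_mul_cancel₀ (norm_ne_zero_iff.mpr (hun k))]
  have hvpos : ∀ k i, 0 ≤ v k i := by
    intro k i
    exact mul_nonneg (inv_nonneg.mpr (norm_nonneg _)) (hu1 k i)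
  have hvneg : ∀ k, v k ⬝ᵥ ((b k : Sn n) : Matrix (Fin n) (Fin n) ℝ) *ᵥ v k < 0 := by
    intro k
    rw [hv]
    simp only [smul_dotProduct, mulVec_smul, dotProduct_smul, smul_eq_mul]
    have h1 : 0 < ‖u k‖⁻¹ := inv_pos.mpr (norm_pos_iff.mpr (hun k))
    exact mul_neg_of_pos_of_neg h1 (mul_neg_of_pos_of_neg h1 (hu2 k))
  -- compactness of sphere
  obtain ⟨ξ, hξmem, φ, hφ, hξlim⟩ :=
    (isCompact_sphere (0 : Fin n → ℝ) 1).tendsto_subseq (fun k => by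
      simpa [Metric.mem_sphere, dist_zero_right] using hvnorm k : ∀ k, v k ∈ Metric.sphere (0 : Fin n → ℝ) 1)
  refine ⟨ξ, ?_, ?_, ?_⟩
  · intro h
    rw [h] at hξmem
    simp at hξmem
  · intro i
    have : Filter.Tendsto (fun k => v (φ k) i) Filter.atTop (nhds (ξ i)) :=
      ((continuous_apply i).tendsto _).comp hξlim
    exact ge_of_tendsto' this (fun k => hvpos (φ k) i)
  · have hlim : Filter.Tendsto
        (fun k => v (φ k) ⬝ᵥ ((b (φ k) : Sn n) : Matrix (Fin n) (Fin n) ℝ) *ᵥ v (φ k))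
        Filter.atTop (nhds (ξ ⬝ᵥ (a : Matrix (Fin n) (Fin n) ℝ) *ᵥ ξ)) := by
      have hb' : Filter.Tendsto (fun k => b (φ k)) Filter.atTop (nhds a) :=
        hb.comp hφ.tendsto_atTop
      exact ((qf_continuous n).tendsto (a, ξ)).comp (hb'.prodMk_nhds hξlim)
    have h1 : ξ ⬝ᵥ (a : Matrix (Fin n) (Fin n) ℝ) *ᵥ ξ ≤ 0 :=
      le_of_tendsto' hlim (fun k => (hvneg (φ k)).le)
    have h2 : 0 ≤ ξ ⬝ᵥ (a : Matrix (Fin n) (Fin n) ℝ) *ᵥ ξ := by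
      apply haC
      intro i
      have : Filter.Tendsto (fun k => v (φ k) i) Filter.atTop (nhds (ξ i)) :=
        ((continuous_apply i).tendsto _).comp hξlim
      exact ge_of_tendsto' this (fun k => hvpos (φ k) i)
    linarith
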